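/- Define C^M(L₁, ℓ, ℓ') = (2/L₁)·log((e^{L₁/2} + e^{(ℓ+ℓ')/2})/(e^{−L₁/2} + e^{(ℓ+ℓ')/2})). Then (1/2)·∫₀^∞ ℓ·C^M(L₁, ℓ, ℓ) dℓ = π²/12 + L₁²/48 for every L₁ > 0. -/

import Mathlib

open MeasureTheory

open Real Set Filter Asymptotics in
/-- `mg u = log (1 + exp (-u))`, the softplus of `-u`. -/
noncomputable def mg (u : ℝ) : ℝ := Real.log (1 + Real.exp (-u))

lemma mg_nonneg (u : ℝ) : 0 ≤ mg u :=
  Real.log_nonneg (by have := Real.exp_pos (-u); linarith)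

lemma mg_le (u : ℝ) : mg u ≤ Real.exp (-u) := by
  have h := Real.log_le_sub_one_of_pos (x := 1 + Real.exp (-u))
    (by have := Real.exp_pos (-u); linarith)
  simpa [mg] using h

lemma mg_cont : Continuous mg :=
  Continuous.log (continuous_const.add (Real.continuous_exp.comp continuous_neg))
    (fun x => ne_of_gt (by positivity))

lemma mg_flip (x : ℝ) : mg (-x) = x + mg x := by
  have h : 1 + Real.exp x = Real.exp x * (1 + Real.exp (-x)) := by
    rw [mul_add, mul_one, ← Real.exp_add]
    simp [add_comm]
  have hpos : (0:ℝ) < 1 + Real.exp (-x) := by have := Real.exp_pos (-x); linarith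
  rw [mg, neg_neg, h, Real.log_mul (Real.exp_ne_zero _) (ne_of_gt hpos), Real.log_exp, mg]

open Filter Asymptotics in
lemma mg_integrable (c d b : ℝ) :
    IntegrableOn (fun u => (u + c) * mg (u + d)) (Set.Ioi b) := by
  apply integrable_of_isBigO_exp_neg (b := 1/2) one_half_pos
  · exact ((continuous_id.add continuous_const).mul
      (mg_cont.comp (continuous_id.add continuous_const))).continuousOn
  · have hT : Tendsto (fun v : ℝ => (2 * v + |c|) * Real.exp (-v)) atTop (nhds 0) := by
      have h1 := ((Real.tendsto_pow_mul_exp_neg_atTop_nhds_zero 1).const_mul (2:ℝ)).add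
        (Real.tendsto_exp_neg_atTop_nhds_zero.const_mul |c|)
      simp only [pow_one, mul_zero, add_zero] at h1
      refine h1.congr fun v => by ring
    have h2 : (fun u : ℝ => (u + |c|) * Real.exp (-(u + d)))
        =o[atTop] (fun x : ℝ => Real.exp (-(1/2) * x)) := by
      rw [isLittleO_iff_tendsto fun x hx => absurd hx (Real.exp_ne_zero _)]
      have heq : (fun u : ℝ => (u + |c|) * Real.exp (-(u + d)) / Real.exp (-(1/2) * u))
          = fun u : ℝ => Real.exp (-d) * ((2 * (u / 2) + |c|) * Real.exp (-(u / 2))) := by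
        funext u
        rw [mul_div_assoc, ← Real.exp_sub, show -(u + d) - -(1/2) * u = -d + -(u/2) by ring,
          Real.exp_add]
        ring
      rw [heq, show (0:ℝ) = Real.exp (-d) * 0 by ring]
      exact (hT.comp (tendsto_id.atTop_div_const two_pos)).const_mul _
    refine IsBigO.trans ?_ h2.isBigO
    apply IsBigO.of_bound 1
    filter_upwards [eventually_ge_atTop |c|] with u hu
    have hc0 : 0 ≤ |c| := abs_nonneg c
    have h0 : 0 ≤ u + c := by have := neg_abs_le c; linarith
    rw [one_mul, Real.norm_eq_abs, Real.norm_eq_abs, abs_mul,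
      abs_of_nonneg (mg_nonneg (u + d)), abs_of_nonneg h0]
    have hle1 : u + c ≤ u + |c| := by have := le_abs_self c; linarith
    calc (u + c) * mg (u + d) ≤ (u + |c|) * Real.exp (-(u + d)) :=
          mul_le_mul hle1 (mg_le _) (mg_nonneg _) (by linarith)
      _ ≤ |(u + |c|) * Real.exp (-(u + d))| := le_abs_self _

lemma mg_integrable' (b : ℝ) : IntegrableOn mg (Set.Ioi b) := by
  apply integrable_of_isBigO_exp_neg (b := 1/2) one_half_pos mg_cont.continuousOn
  apply Asymptotics.IsBigO.of_bound 1
  filter_upwards [Filter.eventually_ge_atTop (0:ℝ)] with u hu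
  rw [one_mul, Real.norm_eq_abs, Real.norm_eq_abs, abs_of_nonneg (mg_nonneg u),
    abs_of_pos (Real.exp_pos _)]
  calc mg u ≤ Real.exp (-u) := mg_le u
    _ ≤ Real.exp (-(1/2) * u) := Real.exp_le_exp.2 (by linarith)

lemma shift_Ioi (F : ℝ → ℝ) (c d : ℝ) :
    ∫ x in Set.Ioi c, F (x + d) = ∫ u in Set.Ioi (c + d), F u := by
  have emb : MeasurableEmbedding (fun x : ℝ => x + d) :=
    (Homeomorph.addRight d).toMeasurableEquiv.measurableEmbedding
  have h := (measurePreserving_add_right (volume : Measure ℝ) d).setIntegral_preimage_emb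
    emb F (Set.Ioi (c + d))
  have hpre : (fun x : ℝ => x + d) ⁻¹' Set.Ioi (c + d) = Set.Ioi c := by
    ext x; simp
  rw [← h, hpre]

open Real Set Filter Asymptotics

lemma alt_sum : HasSum (fun n : ℕ => (-1:ℝ)^n / ((n:ℝ)+1)^2) (Real.pi^2/12) := by
  set T : ℕ → ℝ := fun n : ℕ => (-1:ℝ)^n / ((n:ℝ)+1)^2 with hT
  set f : ℕ → ℝ := fun n : ℕ => 1 / ((n:ℝ)+1)^2 with hf
  have h1 : HasSum f (Real.pi^2/6) := by
    have h0 : HasSum (fun n : ℕ => (1:ℝ) / ((n:ℝ))^2) (Real.pi^2/6 + ∑ i ∈ Finset.range 1,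
        (1:ℝ)/((i:ℝ))^2) := by
      simpa using hasSum_zeta_two
    have h2 := (hasSum_nat_add_iff (f := fun n : ℕ => (1:ℝ)/((n:ℝ))^2) 1).2 h0
    refine h2.congr_fun fun n => ?_
    rw [hf]
    push_cast
    ring
  have heven : HasSum (fun k : ℕ => f (2*k+1)) (Real.pi^2/24) := by
    have h4 := h1.mul_left (1/4)
    have hv : (1/4) * (Real.pi^2/6) = Real.pi^2/24 := by ring
    rw [hv] at h4
    refine h4.congr_fun fun k => ?_
    rw [hf]
    simp only []
    push_cast
    field_simp
    ring
  have hfe : Summable (fun k : ℕ => f (2*k)) :=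
    (h1.summable.comp_injective (i := fun k : ℕ => 2*k)
      (fun a b h => by simpa using h)).congr (fun k => rfl)
  have hcomb := HasSum.even_add_odd hfe.hasSum heven
  have hval : ∑' k : ℕ, f (2*k) = Real.pi^2/8 := by
    have := h1.unique hcomb
    linarith
  have hodd : HasSum (fun k : ℕ => f (2*k)) (Real.pi^2/8) := hval ▸ hfe.hasSum
  have hTe : HasSum (fun k : ℕ => T (2*k)) (Real.pi^2/8) := by
    refine hodd.congr_fun fun k => ?_
    rw [hT, hf]
    simp only []
    rw [Even.neg_one_pow (even_two_mul k)]
  have hTo : HasSum (fun k : ℕ => T (2*k+1)) (-(Real.pi^2/24)) := by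
    refine heven.neg.congr_fun fun k => ?_
    rw [hT, hf]
    simp only []
    rw [Odd.neg_one_pow ⟨k, rfl⟩]
    push_cast
    ring
  have hfin := HasSum.even_add_odd hTe hTo
  convert hfin using 1
  ring

lemma int_exp_rate {c : ℝ} (hc : 0 < c) :
    ∫ u in Set.Ioi (0:ℝ), Real.exp (-(c * u)) = 1/c := by
  have h : ∀ u : ℝ, Real.exp (-(c * u)) = (fun x => Real.exp (-x)) (u * c) := by
    intro u; simp [mul_comm]
  simp_rw [h]
  rw [integral_comp_mul_right_Ioi (fun x => Real.exp (-x)) 0 hc]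
  simp [integral_exp_neg_Ioi, smul_eq_mul, one_div, integral_exp_Iic]

lemma mg_integral : ∫ u in Set.Ioi (0:ℝ), mg u = Real.pi^2/12 := by
  set F : ℕ → ℝ → ℝ := fun n u => (-1:ℝ)^n * Real.exp (-(((n:ℝ)+1) * u)) / ((n:ℝ)+1) with hF
  have hpos : ∀ n : ℕ, (0:ℝ) < (n:ℝ) + 1 := fun n => by positivity
  have hFint : ∀ n : ℕ, Integrable (F n) (volume.restrict (Set.Ioi (0:ℝ))) := by
    intro n
    have := ((exp_neg_integrableOn_Ioi 0 (hpos n)).const_mul ((-1:ℝ)^n)).div_const ((n:ℝ)+1)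
    simpa only [neg_mul] using this
  have hFval : ∀ n : ℕ, ∫ u in Set.Ioi (0:ℝ), F n u = (-1:ℝ)^n / ((n:ℝ)+1)^2 := by
    intro n
    rw [show F n = fun u : ℝ => ((-1:ℝ)^n / ((n:ℝ)+1)) * Real.exp (-(((n:ℝ)+1) * u)) from
      funext fun u => by rw [hF]; ring]
    rw [integral_const_mul, int_exp_rate (hpos n)]
    field_simp
  have hnorm : ∀ n : ℕ, ∫ u in Set.Ioi (0:ℝ), ‖F n u‖ = 1 / ((n:ℝ)+1)^2 := by
    intro n
    have h : ∀ u : ℝ, ‖F n u‖ = (1/((n:ℝ)+1)) * Real.exp (-(((n:ℝ)+1) * u)) := by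
      intro u
      rw [hF]
      simp only []
      rw [Real.norm_eq_abs, abs_div, abs_mul, abs_pow, abs_neg, abs_one, one_pow, one_mul,
        abs_of_pos (Real.exp_pos _), abs_of_pos (hpos n)]
      ring
    simp_rw [h]
    rw [integral_const_mul, int_exp_rate (hpos n)]
    field_simp
  have hsummable : Summable (fun n : ℕ => ∫ u in Set.Ioi (0:ℝ), ‖F n u‖) := by
    rw [funext hnorm]
    have h2 := (summable_one_div_nat_pow (p := 2)).2 one_lt_two
    have h3 := (summable_nat_add_iff (f := fun n : ℕ => 1/((n:ℝ))^2) 1).2 h2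
    refine h3.congr fun n => ?_
    push_cast
    ring
  have key := MeasureTheory.integral_tsum_of_summable_integral_norm hFint hsummable
  have hpt : ∀ u ∈ Set.Ioi (0:ℝ), (∑' n, F n u) = mg u := by
    intro u hu
    have hu0 : (0:ℝ) < u := hu
    have hx : |(-Real.exp (-u))| < 1 := by
      rw [abs_neg, abs_of_pos (Real.exp_pos _)]
      exact Real.exp_lt_one_iff.mpr (by linarith)
    have hs := (hasSum_pow_div_log_of_abs_lt_one hx).neg
    rw [neg_neg] at hs
    have heq : ∀ n : ℕ, F n u = -((-Real.exp (-u))^(n+1) / (((n:ℕ):ℝ)+1)) := by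
      intro n
      have h1 : (-Real.exp (-u))^(n+1) = (-1:ℝ)^(n+1) * Real.exp (-(((n:ℝ)+1)*u)) := by
        rw [neg_pow, ← Real.exp_nat_mul,
          show ((n+1 : ℕ):ℝ) * (-u) = -(((n:ℝ)+1)*u) by push_cast; ring]
      rw [hF]
      simp only []
      rw [h1, pow_succ]
      ring
    have hS : HasSum (fun n => F n u) (Real.log (1 - -Real.exp (-u))) := hs.congr_fun heq
    rw [hS.tsum_eq, mg, sub_neg_eq_add]
  rw [← setIntegral_congr_fun measurableSet_Ioi hpt, ← key, tsum_congr hFval, alt_sum.tsum_eq]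

lemma main_integral (a : ℝ) (ha : 0 < a) :
    ∫ ℓ in Set.Ioi (0:ℝ), ℓ * (mg (ℓ - a) - mg (ℓ + a)) = a^3/6 + a * Real.pi^2/6 := by
  have hint1 : IntegrableOn (fun ℓ => ℓ * mg (ℓ - a)) (Set.Ioi (0:ℝ)) := by
    have := mg_integrable 0 (-a) 0
    simp only [add_zero, ← sub_eq_add_neg] at this
    exact this
  have hint2 : IntegrableOn (fun ℓ => ℓ * mg (ℓ + a)) (Set.Ioi (0:ℝ)) := by
    have := mg_integrable 0 a 0
    simp only [add_zero] at this
    exact this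
  have hA : IntegrableOn (fun x => (x + a) * mg x) (Set.Ioi (0:ℝ)) := by
    have := mg_integrable a 0 0
    simp only [add_zero] at this
    exact this
  have hB : IntegrableOn (fun x => (x - a) * mg x) (Set.Ioi (0:ℝ)) := by
    have := mg_integrable (-a) 0 0
    simp only [add_zero, ← sub_eq_add_neg] at this
    exact this
  -- split lemma
  have hsplit : ∀ f : ℝ → ℝ, IntegrableOn f (Set.Ioi (0:ℝ)) →
      ∫ u in Set.Ioi (0:ℝ), f u = (∫ u in Set.Ioc 0 a, f u) + ∫ u in Set.Ioi a, f u := by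
    intro f hf
    rw [← MeasureTheory.setIntegral_union (Set.Ioc_disjoint_Ioi le_rfl) measurableSet_Ioi
      (hf.mono_set Set.Ioc_subset_Ioi_self) (hf.mono_set (Set.Ioi_subset_Ioi ha.le)),
      Set.Ioc_union_Ioi_eq_Ioi ha.le]
  -- interval pieces
  have hIoc1 : ∫ u in Set.Ioc (0:ℝ) a, u * mg (u - a)
      = a^3/6 + ∫ x in (0:ℝ)..a, (a - x) * mg x := by
    rw [← intervalIntegral.integral_of_le ha.le]
    have hrw : ∀ u : ℝ, u * mg (u - a) = (u*a - u^2) + u * mg (a - u) := by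
      intro u
      rw [show u - a = -(a - u) by ring, mg_flip (a - u)]
      ring
    have c1 : Continuous fun u : ℝ => u * a := by continuity
    have c2 : Continuous fun u : ℝ => u ^ 2 := by continuity
    have c3 : Continuous fun u : ℝ => u * mg (a - u) :=
      continuous_id.mul (mg_cont.comp (continuous_const.sub continuous_id))
    rw [intervalIntegral.integral_congr (fun u _ => hrw u)]
    rw [intervalIntegral.integral_add (f := fun u => u * a - u ^ 2)
      ((c1.sub c2).intervalIntegrable 0 a) (c3.intervalIntegrable 0 a)]
    congr 1
    · rw [intervalIntegral.integral_sub (c1.intervalIntegrable 0 a) (c2.intervalIntegrable 0 a),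
        intervalIntegral.integral_mul_const, integral_id, integral_pow]
      norm_num
      ring
    · have h := intervalIntegral.integral_comp_sub_left (a := (0:ℝ)) (b := a)
        (fun x => (a - x) * mg x) a
      simp only [sub_sub_cancel, sub_zero, sub_self] at h
      rw [← h]
  have hIoc2 : ∫ u in Set.Ioc (0:ℝ) a, (u - a) * mg u
      = -∫ x in (0:ℝ)..a, (a - x) * mg x := by
    rw [← intervalIntegral.integral_of_le ha.le, ← intervalIntegral.integral_neg]
    exact intervalIntegral.integral_congr (fun x _ => by ring)
  -- shifts
  have hJ1b : ∫ u in Set.Ioi a, u * mg (u - a) = ∫ x in Set.Ioi (0:ℝ), (x + a) * mg x := by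
    have h := shift_Ioi (fun u => u * mg (u - a)) 0 a
    simp only [add_sub_cancel_right, zero_add] at h
    exact h.symm
  have hJ2 : ∫ ℓ in Set.Ioi (0:ℝ), ℓ * mg (ℓ + a) = ∫ u in Set.Ioi a, (u - a) * mg u := by
    have h := shift_Ioi (fun u => (u - a) * mg u) 0 a
    simp only [add_sub_cancel_right, zero_add] at h
    exact h.symm ▸ rfl
  -- difference identity
  have hdiff : (∫ x in Set.Ioi (0:ℝ), (x + a) * mg x) - ∫ x in Set.Ioi (0:ℝ), (x - a) * mg x
      = a * Real.pi^2/6 := by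
    rw [← integral_sub hA hB]
    have : ∀ x : ℝ, (x + a) * mg x - (x - a) * mg x = (2*a) * mg x := fun x => by ring
    simp_rw [this]
    rw [integral_const_mul, mg_integral]
    ring
  -- assemble
  have hsub : ∫ ℓ in Set.Ioi (0:ℝ), ℓ * (mg (ℓ - a) - mg (ℓ + a))
      = (∫ ℓ in Set.Ioi (0:ℝ), ℓ * mg (ℓ - a)) - ∫ ℓ in Set.Ioi (0:ℝ), ℓ * mg (ℓ + a) := by
    rw [← integral_sub hint1 hint2]
    exact setIntegral_congr_fun measurableSet_Ioi (fun ℓ _ => by ring)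
  rw [hsub, hsplit _ hint1, hIoc1, hJ1b, hJ2]
  have hs2 := hsplit (fun u => (u - a) * mg u) hB
  linarith [hdiff, hIoc2, hs2]

theorem mirzakhani_VD (L₁ : ℝ) (hL₁ : 0 < L₁) :
    (1 / 2) * ∫ ℓ in Set.Ioi (0 : ℝ),
        ℓ * ((2 / L₁) * Real.log ((Real.exp (L₁ / 2) + Real.exp ((ℓ + ℓ) / 2)) /
          (Real.exp (-L₁ / 2) + Real.exp ((ℓ + ℓ) / 2))))
      = Real.pi ^ 2 / 12 + L₁ ^ 2 / 48 := by
  have ha : 0 < L₁ / 2 := by linarith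
  have hpt : ∀ ℓ : ℝ, ℓ * ((2 / L₁) * Real.log ((Real.exp (L₁ / 2) + Real.exp ((ℓ + ℓ) / 2)) /
        (Real.exp (-L₁ / 2) + Real.exp ((ℓ + ℓ) / 2))))
      = (2 / L₁) * (ℓ * (mg (ℓ - L₁ / 2) - mg (ℓ + L₁ / 2))) := by
    intro ℓ
    have h2 : (ℓ + ℓ) / 2 = ℓ := by ring
    rw [h2]
    have hnum : Real.exp (L₁ / 2) + Real.exp ℓ
        = Real.exp ℓ * (1 + Real.exp (-(ℓ - L₁ / 2))) := by
      rw [mul_add, mul_one, ← Real.exp_add, show ℓ + -(ℓ - L₁ / 2) = L₁ / 2 by ring]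
      ring
    have hden : Real.exp (-L₁ / 2) + Real.exp ℓ
        = Real.exp ℓ * (1 + Real.exp (-(ℓ + L₁ / 2))) := by
      rw [mul_add, mul_one, ← Real.exp_add, show ℓ + -(ℓ + L₁ / 2) = -L₁ / 2 by ring]
      ring
    have hp1 : (0:ℝ) < 1 + Real.exp (-(ℓ - L₁ / 2)) := by positivity
    have hp2 : (0:ℝ) < 1 + Real.exp (-(ℓ + L₁ / 2)) := by positivity
    rw [hnum, hden, mul_div_mul_left _ _ (Real.exp_ne_zero ℓ),
      Real.log_div (ne_of_gt hp1) (ne_of_gt hp2)]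
    simp only [mg]
    ring
  simp_rw [hpt]
  rw [integral_const_mul, main_integral (L₁ / 2) ha]
  have hL : L₁ ≠ 0 := ne_of_gt hL₁
  field_simp
  ring
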